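/- (Theorem 3.3) For every integer N ≥ 3, the matrix P_sk is invertible. -/

import Mathlib

open scoped Matrix

/-- The coefficients `g_k^{(β)}`. -/
noncomputable def gcoef (β : ℝ) : ℕ → ℝ
  | 0 => 1
  | k + 1 => (1 - (β + 1) / ((k : ℝ) + 1)) * gcoef β k

/-- The WSGD coefficients `ω_k^{(β)}`. -/
noncomputable def w (β : ℝ) : ℕ → ℝ
  | 0 => β / 2 * gcoef β 0
  | k + 1 => β / 2 * gcoef β (k + 1) + (2 - β) / 2 * gcoef β k
/-- The `(N−1) × (N−1)` lower Hessenberg Toeplitz matrix `G_β`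
(1-based entry `(i,j)` equals `ω_{i−j+1}` when `i − j + 1 ≥ 0`, else `0`). -/
noncomputable def Gmat (β : ℝ) (N : ℕ) : Matrix (Fin (N - 1)) (Fin (N - 1)) ℝ :=
  Matrix.of fun i j => if (j : ℕ) ≤ (i : ℕ) + 1 then w β ((i : ℕ) + 1 - (j : ℕ)) else 0

/-- `K_N = e₁·G_β + e₂·G_βᵀ`. -/
noncomputable def Kmat (β e1 e2 : ℝ) (N : ℕ) : Matrix (Fin (N - 1)) (Fin (N - 1)) ℝ :=
  e1 • Gmat β N + e2 • (Gmat β N)ᵀ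
/-- `c_0^{(α,σ)} = τ^{−α}·σ^{1−α}/Γ(2−α)` with `σ = 1 − α/2`. -/
noncomputable def c0 (α τ : ℝ) : ℝ :=
  τ ^ (-α) * (1 - α / 2) ^ (1 - α) / Real.Gamma (2 - α)

/-- `A_0 = h^β·c_0^{(α,σ)}·I − σ·K_N` with `σ = 1 − α/2`. -/
noncomputable def A0mat (β α h τ e1 e2 : ℝ) (N : ℕ) :
    Matrix (Fin (N - 1)) (Fin (N - 1)) ℝ :=
  (h ^ β * c0 α τ) • (1 : Matrix (Fin (N - 1)) (Fin (N - 1)) ℝ) -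
    (1 - α / 2) • Kmat β e1 e2 N
/-- The skew-circulant matrix `sk(G_β)` with first column
`(ω_1, ω_2, …, ω_{N−2}, −ω_0)ᵀ`. -/
noncomputable def skG (β : ℝ) (N : ℕ) : Matrix (Fin (N - 1)) (Fin (N - 1)) ℝ :=
  Matrix.of fun i j =>
    if (j : ℕ) ≤ (i : ℕ) then
      (if (i : ℕ) - (j : ℕ) = N - 2 then -(w β 0) else w β ((i : ℕ) - (j : ℕ) + 1))
    else
      -(if N - 1 - ((j : ℕ) - (i : ℕ)) = N - 2 then -(w β 0)
        else w β (N - 1 - ((j : ℕ) - (i : ℕ)) + 1))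

/-- `sk(K_N) = e₁·sk(G_β) + e₂·sk(G_β)ᵀ`. -/
noncomputable def skK (β e1 e2 : ℝ) (N : ℕ) : Matrix (Fin (N - 1)) (Fin (N - 1)) ℝ :=
  e1 • skG β N + e2 • (skG β N)ᵀ

/-- The skew-circulant preconditioner `P_sk = h^β·c_0^{(α,σ)}·I − σ·sk(K_N)`. -/
noncomputable def Psk (β α h τ e1 e2 : ℝ) (N : ℕ) :
    Matrix (Fin (N - 1)) (Fin (N - 1)) ℝ :=
  (h ^ β * c0 α τ) • (1 : Matrix (Fin (N - 1)) (Fin (N - 1)) ℝ) -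
    (1 - α / 2) • skK β e1 e2 N

section coeffs
variable {β : ℝ} (hβ1 : 1 < β) (hβ2 : β < 2)

lemma gcoef_one : gcoef β 1 = -β := by
  show (1 - (β + 1) / ((0:ℕ) + 1)) * gcoef β 0 = -β
  simp [gcoef]

lemma gcoef_two : gcoef β 2 = β * (β - 1) / 2 := by
  show (1 - (β + 1) / ((1:ℕ) + 1)) * gcoef β 1 = _
  rw [gcoef_one]; push_cast; ring

include hβ1 hβ2 in
lemma gcoef_pos : ∀ k, 0 < gcoef β (k + 2) := by
  intro k
  induction k with
  | zero => rw [gcoef_two]; nlinarith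
  | succ m ih =>
      show 0 < (1 - (β + 1) / ((m + 2 : ℕ) + 1)) * gcoef β (m + 2)
      have h1 : (β + 1) / ((m + 2 : ℕ) + 1 : ℝ) < 1 := by
        rw [div_lt_one (by positivity)]
        push_cast; linarith [Nat.cast_nonneg (α := ℝ) m]
      nlinarith

include hβ1 hβ2 in
lemma w_pos : ∀ k, 0 < w β (k + 3) := by
  intro k
  show 0 < β / 2 * gcoef β (k + 2 + 1) + (2 - β) / 2 * gcoef β (k + 2)
  have h1 := gcoef_pos hβ1 hβ2 (k + 1)
  have h2 := gcoef_pos hβ1 hβ2 k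
  have : k + 1 + 2 = k + 2 + 1 := by ring
  rw [this] at h1
  nlinarith

lemma w_zero : w β 0 = β / 2 := by simp [w, gcoef]

lemma w_one : w β 1 = (2 - β - β ^ 2) / 2 := by
  show β / 2 * gcoef β 1 + (2 - β) / 2 * gcoef β 0 = _
  rw [gcoef_one]; simp [gcoef]; ring

include hβ1 in
lemma w_one_neg : w β 1 < 0 := by rw [w_one]; nlinarith

include hβ1 hβ2 in
lemma w_zero_add_two_nonneg : 0 ≤ w β 0 + w β 2 := by
  have : w β 2 = β / 2 * gcoef β 2 + (2 - β) / 2 * gcoef β 1 := rfl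
  rw [w_zero, this, gcoef_two, gcoef_one]
  have key : β / 2 + (β / 2 * (β * (β - 1) / 2) + (2 - β) / 2 * -β)
      = β * (β - 1) * (β + 2) / 4 := by ring
  rw [key]
  have h := mul_nonneg (mul_nonneg (by linarith : (0:ℝ) ≤ β)
    (by linarith : (0:ℝ) ≤ β - 1)) (by linarith : (0:ℝ) ≤ β + 2)
  linarith

include hβ1 hβ2 in
lemma gcoef_neg' : ∀ m, gcoef (β - 1) (m + 1) < 0 := by
  intro m
  induction m with
  | zero =>
      show (1 - (β - 1 + 1) / ((0:ℕ) + 1)) * gcoef (β - 1) 0 < 0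
      simp [gcoef]; linarith
  | succ m ih =>
      show (1 - (β - 1 + 1) / ((m + 1 : ℕ) + 1)) * gcoef (β - 1) (m + 1) < 0
      have h1 : (β - 1 + 1) / ((m + 1 : ℕ) + 1 : ℝ) < 1 := by
        rw [div_lt_one (by positivity)]
        push_cast; linarith [Nat.cast_nonneg (α := ℝ) m]
      nlinarith

lemma gcoef_step : ∀ m, gcoef β (m + 1) = (-β / ((m : ℝ) + 1)) * gcoef (β - 1) m := by
  intro m
  induction m with
  | zero => rw [gcoef_one]; simp [gcoef]
  | succ m ih =>
      show (1 - (β + 1) / ((m + 1 : ℕ) + 1)) * gcoef β (m + 1) = _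
      rw [ih]
      have hg : gcoef (β - 1) (m + 1)
          = (1 - ((β - 1) + 1) / ((m : ℝ) + 1)) * gcoef (β - 1) m := rfl
      rw [hg]
      have hm1 : ((m : ℝ) + 1) ≠ 0 := by positivity
      have hm2 : ((m : ℝ) + 1 + 1) ≠ 0 := by positivity
      push_cast
      field_simp
      ring

lemma gcoef_sum : ∀ m, ∑ k ∈ Finset.range (m + 1), gcoef β k = gcoef (β - 1) m := by
  intro m
  induction m with
  | zero => simp [gcoef]
  | succ m ih =>
      rw [Finset.sum_range_succ, ih, gcoef_step]
      show _ = (1 - (β - 1 + 1) / ((m:ℝ) + 1)) * gcoef (β - 1) m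
      have hm1 : ((m : ℝ) + 1) ≠ 0 := by positivity
      field_simp
      ring

lemma w_sum_aux : ∀ m, ∑ k ∈ Finset.range (m + 1), w β k
    = β / 2 * (∑ k ∈ Finset.range (m + 1), gcoef β k)
      + (2 - β) / 2 * (∑ k ∈ Finset.range m, gcoef β k) := by
  intro m
  induction m with
  | zero => simp [w, gcoef]
  | succ m ih =>
      rw [Finset.sum_range_succ, ih]
      have : w β (m + 1) = β / 2 * gcoef β (m + 1) + (2 - β) / 2 * gcoef β m := rfl
      rw [this, Finset.sum_range_succ (fun k => gcoef β k) (m+1),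
        Finset.sum_range_succ (fun k => gcoef β k) m]
      ring

end coeffs

section trig
variable {β : ℝ} (hβ1 : 1 < β) (hβ2 : β < 2)

include hβ1 hβ2 in
lemma w_sum_nonpos (m : ℕ) : ∑ k ∈ Finset.range (m + 3), w β k ≤ 0 := by
  have h := w_sum_aux (β := β) (m + 2)
  rw [gcoef_sum, gcoef_sum] at h
  rw [h]
  have h1 := gcoef_neg' hβ1 hβ2 (m + 1)
  have h2 := gcoef_neg' hβ1 hβ2 m
  nlinarith

/-- first column entries of `sk(G_β)`. -/
noncomputable def cc (β : ℝ) (n : ℕ) (d : ℕ) : ℝ :=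
  if d = n - 1 then -(w β 0) else w β (d + 1)

lemma cos_flip (n m d : ℕ) (hn : 0 < n) (hd : d ≤ n) :
    Real.cos (((n - d : ℕ) : ℝ) * ((2 * m + 1) * Real.pi / n))
      = - Real.cos ((d : ℝ) * ((2 * m + 1) * Real.pi / n)) := by
  have hn' : (n:ℝ) ≠ 0 := by positivity
  have hcast : ((n - d : ℕ) : ℝ) = (n : ℝ) - d := by
    have := Nat.cast_sub (R := ℝ) hd; exact_mod_cast this
  rw [hcast]
  have harg : ((n:ℝ) - d) * ((2 * m + 1) * Real.pi / n)
      = ((m : ℝ) * (2 * Real.pi) + Real.pi) - (d * ((2 * m + 1) * Real.pi / n)) := by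
    field_simp
  rw [harg, Real.cos_sub]
  have h1 : Real.cos ((m : ℝ) * (2 * Real.pi) + Real.pi) = -1 :=
    Real.cos_nat_mul_two_pi_add_pi m
  have h2 : Real.sin ((m : ℝ) * (2 * Real.pi) + Real.pi) = 0 := by
    have he : ((m : ℝ) * (2 * Real.pi) + Real.pi) = ((2 * m + 1 : ℤ) : ℝ) * Real.pi := by
      push_cast; ring
    rw [he, Real.sin_int_mul_pi]
  rw [h1, h2]; ring

include hβ1 hβ2 in
lemma reSum_nonpos (n m : ℕ) (hn : 2 ≤ n) (hm : m < n) :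
    ∑ d ∈ Finset.range n, cc β n d * Real.cos ((d : ℝ) * ((2 * m + 1) * Real.pi / n)) ≤ 0 := by
  set θ : ℝ := (2 * m + 1) * Real.pi / n with hθ
  set F : ℕ → ℝ := fun d => cc β n d * Real.cos ((d : ℝ) * θ) with hF
  rcases eq_or_lt_of_le hn with hn2 | hn3
  · -- n = 2
    subst hn2
    have hcos : Real.cos ((1 : ℝ) * θ) = 0 := by
      have he : (1 : ℝ) * θ = (m : ℝ) * Real.pi + Real.pi / 2 := by
        rw [hθ]; push_cast; field_simp
      rw [he, Real.cos_add, Real.cos_pi_div_two, Real.sin_pi_div_two]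
      have : Real.sin ((m:ℝ) * Real.pi) = 0 := by
        have : ((m:ℝ) * Real.pi) = ((m : ℤ) : ℝ) * Real.pi := by push_cast; ring
        rw [this, Real.sin_int_mul_pi]
      rw [this]; ring
    have : ∑ d ∈ Finset.range 2, F d = F 0 + F 1 := by
      rw [Finset.sum_range_succ, Finset.sum_range_succ, Finset.sum_range_zero]; ring
    rw [this]
    have hF0 : F 0 = w β 1 := by
      simp only [hF, cc]; norm_num
    have hF1 : F 1 = 0 := by
      simp only [hF]
      push_cast
      rw [hcos, mul_zero]
    rw [hF0, hF1]
    have := w_one_neg hβ1 (β := β)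
    linarith
  · -- 3 ≤ n
    have hn3' : 3 ≤ n := hn3
    have h1mem : (1:ℕ) ∈ Finset.range n := by simp; omega
    have hn1mem : n - 1 ∈ (Finset.range n).erase 1 := by
      simp [Finset.mem_erase]; omega
    rw [← Finset.add_sum_erase _ F h1mem, ← Finset.add_sum_erase _ F hn1mem]
    -- step 1 : tail bound
    set T := ((Finset.range n).erase 1).erase (n - 1) with hT
    set G : ℕ → ℝ := fun d => w β (d + 1) with hG
    have step1 : ∑ d ∈ T, F d ≤ ∑ d ∈ T, G d := by
      apply Finset.sum_le_sum
      intro d hd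
      simp only [hT, Finset.mem_erase, Finset.mem_range] at hd
      obtain ⟨hdn1, hd1, hdn⟩ := hd
      have hcc : cc β n d = w β (d + 1) := by simp [cc, hdn1]
      rcases Nat.eq_zero_or_pos d with rfl | hdpos
      · simp [hF, hG, hcc]
      · -- d ≥ 2
        have hd2 : 2 ≤ d := by omega
        obtain ⟨d', rfl⟩ : ∃ d', d = d' + 2 := ⟨d - 2, by omega⟩
        have hw : 0 ≤ w β (d' + 2 + 1) := le_of_lt (w_pos hβ1 hβ2 d')
        simp only [hF, hG, hcc]
        have := Real.cos_le_one ((d' + 2 : ℕ) * θ)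
        nlinarith
    -- step 2 : F 1 + F (n-1) ≤ w 2 + w 0
    have hccn1 : cc β n (n - 1) = -(w β 0) := by simp [cc]
    have hcc1 : cc β n 1 = w β 2 := by
      have : (1:ℕ) ≠ n - 1 := by omega
      simp [cc, this]
    have hflip : Real.cos (((n - 1 : ℕ) : ℝ) * θ) = - Real.cos ((1:ℝ) * θ) := by
      have := cos_flip n m 1 (by omega) (by omega)
      rw [hθ]; simpa using this
    have step2 : F 1 + F (n - 1) ≤ w β 2 + w β 0 := by
      simp only [hF, hccn1, hcc1, hflip]
      have hc1 := Real.cos_le_one ((1:ℝ) * θ)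
      have hw02 := w_zero_add_two_nonneg hβ1 hβ2
      push_cast
      nlinarith
    -- step 3 : identify with the w-sum
    have hTsum : w β 0 + (w β 2 + ∑ d ∈ T, G d) = ∑ k ∈ Finset.range n, w β k := by
      obtain ⟨n', rfl⟩ : ∃ n', n = n' + 1 := ⟨n - 1, by omega⟩
      rw [Finset.sum_range_succ' (fun k => w β k) n']
      have hT' : T = (Finset.range n').erase 1 := by
        ext a
        simp only [hT, Finset.mem_erase, Finset.mem_range]
        omega
      have h1m : (1:ℕ) ∈ Finset.range n' := by simp; omega
      rw [hT', Finset.add_sum_erase _ G h1m]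
      simp only [hG]
      ring
    have hWsum : ∑ k ∈ Finset.range n, w β k ≤ 0 := by
      obtain ⟨m', rfl⟩ : ∃ m', n = m' + 3 := ⟨n - 3, by omega⟩
      exact w_sum_nonpos hβ1 hβ2 m'
    linarith

end trig

section cx

lemma skG_apply (β : ℝ) (N : ℕ) (i j : Fin (N-1)) :
    skG β N i j = if (j:ℕ) ≤ (i:ℕ) then cc β (N-1) ((i:ℕ) - (j:ℕ))
      else - cc β (N-1) ((N-1) - ((j:ℕ) - (i:ℕ))) := by
  have h21 : N - 2 = N - 1 - 1 := by omega
  simp only [skG, Matrix.of_apply, cc, h21]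

lemma fin_sub_val {n : ℕ} (i j : Fin n) :
    ((i - j : Fin n) : ℕ) = if (j:ℕ) ≤ (i:ℕ) then (i:ℕ) - (j:ℕ) else n - ((j:ℕ) - (i:ℕ)) := by
  have hi := i.isLt
  have hj := j.isLt
  rw [Fin.sub_def]
  simp only
  split_ifs with hle
  · have he : (n - (j:ℕ) + (i:ℕ)) = n + ((i:ℕ) - (j:ℕ)) := by omega
    rw [he, Nat.add_mod_left]
    exact Nat.mod_eq_of_lt (by omega)
  · have he : (n - (j:ℕ) + (i:ℕ)) = n - ((j:ℕ) - (i:ℕ)) := by omega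
    rw [he]
    exact Nat.mod_eq_of_lt (by omega)

variable {β : ℝ} {N : ℕ} (hN : 3 ≤ N) {η : ℂ} (hη : η ^ (N-1) = -1)

include hN hη in
lemma entryG (i j : Fin (N-1)) :
    ((skG β N i j : ℝ) : ℂ) * η ^ (j:ℕ)
      = -((cc β (N-1) ((i - j : Fin (N-1)):ℕ) : ℝ) : ℂ)
          * η ^ ((N-1) - ((i - j : Fin (N-1)):ℕ)) * η ^ (i:ℕ) := by
  have hi := i.isLt
  have hj := j.isLt
  rw [skG_apply, fin_sub_val]
  split_ifs with hle
  · rw [mul_assoc, ← pow_add,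
      (show (N-1) - ((i:ℕ) - (j:ℕ)) + (i:ℕ) = (N-1) + (j:ℕ) by omega),
      pow_add, hη]
    push_cast
    ring
  · rw [mul_assoc, ← pow_add,
      (show (N-1) - ((N-1) - ((j:ℕ) - (i:ℕ))) + (i:ℕ) = (j:ℕ) by omega)]
    push_cast
    ring

include hN hη in
lemma entryGT (i j : Fin (N-1)) :
    ((skG β N j i : ℝ) : ℂ) * η ^ (j:ℕ)
      = ((cc β (N-1) ((j - i : Fin (N-1)):ℕ) : ℝ) : ℂ)
          * η ^ (((j - i : Fin (N-1)):ℕ) + (i:ℕ)) := by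
  have hi := i.isLt
  have hj := j.isLt
  rw [skG_apply, fin_sub_val]
  split_ifs with hle
  · rw [(show (j:ℕ) - (i:ℕ) + (i:ℕ) = (j:ℕ) by omega)]
  · rw [(show (N-1) - ((i:ℕ) - (j:ℕ)) + (i:ℕ) = (N-1) + (j:ℕ) by omega),
      pow_add, hη]
    push_cast
    ring

include hN hη in
lemma sumG (i : Fin (N-1)) :
    ∑ j : Fin (N-1), ((skG β N i j : ℝ) : ℂ) * η ^ (j:ℕ)
      = (∑ d : Fin (N-1), -((cc β (N-1) (d:ℕ) : ℝ) : ℂ) * η ^ ((N-1) - (d:ℕ))) * η ^ (i:ℕ) := by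
  haveI : NeZero (N-1) := ⟨by omega⟩
  rw [Finset.sum_mul]
  rw [← (Equiv.subLeft i).sum_comp
    (fun d : Fin (N-1) => -((cc β (N-1) (d:ℕ) : ℝ) : ℂ) * η ^ ((N-1) - (d:ℕ)) * η ^ (i:ℕ))]
  refine Finset.sum_congr rfl fun j _ => ?_
  simp only [Equiv.subLeft_apply]
  exact entryG hN hη i j

include hN hη in
lemma sumGT (i : Fin (N-1)) :
    ∑ j : Fin (N-1), ((skG β N j i : ℝ) : ℂ) * η ^ (j:ℕ)
      = (∑ d : Fin (N-1), ((cc β (N-1) (d:ℕ) : ℝ) : ℂ) * η ^ ((d:ℕ))) * η ^ (i:ℕ) := by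
  haveI : NeZero (N-1) := ⟨by omega⟩
  rw [Finset.sum_mul]
  rw [← (Equiv.subRight i).sum_comp
    (fun d : Fin (N-1) => ((cc β (N-1) (d:ℕ) : ℝ) : ℂ) * η ^ ((d:ℕ)) * η ^ (i:ℕ))]
  refine Finset.sum_congr rfl fun j _ => ?_
  simp only [Equiv.subRight_apply]
  rw [entryGT hN hη i j, pow_add]
  ring

end cx

open Complex

theorem Psk_invertible (N : ℕ) (hN : 3 ≤ N)
    (β α h τ e1 e2 : ℝ) (hβ1 : 1 < β) (hβ2 : β < 2)
    (hα0 : 0 < α) (hα1 : α < 1) (hh : 0 < h) (hτ : 0 < τ)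
    (he1 : 0 < e1) (he2 : 0 < e2) :
    IsUnit (Psk β α h τ e1 e2 N) := by
  haveI : NeZero (N-1) := ⟨by omega⟩
  have hn2 : 2 ≤ N - 1 := by omega
  have hn0 : ((N-1 : ℕ) : ℝ) ≠ 0 := by
    have : (0:ℕ) < N - 1 := by omega
    positivity
  have hn0' : (N : ℝ) - 1 ≠ 0 := by
    have h3 : (3:ℝ) ≤ (N:ℝ) := by exact_mod_cast hN
    linarith
  -- the angles and eigenvector entries
  set θ : Fin (N-1) → ℝ := fun m => (2 * (m:ℕ) + 1) * Real.pi / ((N-1 : ℕ) : ℝ) with hθ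
  set η : Fin (N-1) → ℂ := fun m => Complex.exp ((θ m : ℝ) * I) with hη
  have hpow : ∀ (m : Fin (N-1)) (k : ℕ), η m ^ k = Complex.exp (((k : ℝ) * θ m : ℝ) * I) := by
    intro m k
    rw [hη, ← Complex.exp_nat_mul]
    congr 1
    push_cast
    ring
  have hηpow : ∀ m, η m ^ (N-1) = -1 := by
    intro m
    rw [hpow m (N-1)]
    have he : ((N-1:ℕ) : ℝ) * θ m = (2 * ((m:ℕ):ℝ) + 1) * Real.pi := by
      rw [hθ]; field_simp
    rw [he]
    have h2 : (((2 * ((m:ℕ):ℝ) + 1) * Real.pi : ℝ) : ℂ) * I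
        = ((2 * (m:ℕ) + 1 : ℕ) : ℂ) * ((Real.pi : ℂ) * I) := by push_cast; ring
    rw [h2, Complex.exp_nat_mul, Complex.exp_pi_mul_I]
    exact Odd.neg_one_pow ⟨(m:ℕ), by ring⟩
  -- injectivity of η
  have hηinj : Function.Injective η := by
    intro a b hab
    rw [hη] at hab
    simp only at hab
    rw [Complex.exp_eq_exp_iff_exists_int] at hab
    obtain ⟨k, hk⟩ := hab
    have him := congrArg Complex.im hk
    simp [Complex.add_im, Complex.mul_im, Complex.mul_re] at him
    -- him : θ a = θ b + k * (2 * π)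
    have hA : ((N-1:ℕ) : ℝ) * θ a = (2 * ((a:ℕ):ℝ) + 1) * Real.pi := by
      rw [hθ]; field_simp
    have hB : ((N-1:ℕ) : ℝ) * θ b = (2 * ((b:ℕ):ℝ) + 1) * Real.pi := by
      rw [hθ]; field_simp
    have h6 : (2 * ((a:ℕ):ℝ) + 1) * Real.pi
        = (2 * ((b:ℕ):ℝ) + 1 + 2 * (k:ℝ) * ((N-1:ℕ):ℝ)) * Real.pi := by
      linear_combination ((N-1:ℕ):ℝ) * him - hA + hB
    have h7 : 2 * ((a:ℕ):ℝ) + 1 = 2 * ((b:ℕ):ℝ) + 1 + 2 * (k:ℝ) * ((N-1:ℕ):ℝ) :=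
      mul_right_cancel₀ Real.pi_ne_zero h6
    have h8 : ((a:ℕ):ℝ) = ((b:ℕ):ℝ) + (k:ℝ) * ((N-1:ℕ):ℝ) := by linarith
    have h5 : ((a:ℕ):ℤ) = ((b:ℕ):ℤ) + k * ((N-1:ℕ):ℤ) := by exact_mod_cast h8
    have ha' : ((a:ℕ):ℤ) < ((N-1:ℕ):ℤ) := by exact_mod_cast a.isLt
    have hb' : ((b:ℕ):ℤ) < ((N-1:ℕ):ℤ) := by exact_mod_cast b.isLt
    have ha0 : (0:ℤ) ≤ ((a:ℕ):ℤ) := by positivity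
    have hb0 : (0:ℤ) ≤ ((b:ℕ):ℤ) := by positivity
    have hN1 : (1:ℤ) ≤ ((N-1:ℕ):ℤ) := by exact_mod_cast (by omega : 1 ≤ N - 1)
    have hk0 : k = 0 := by
      rcases lt_trichotomy k 0 with hk | hk | hk
      · have hk1 : k ≤ -1 := by omega
        have : k * ((N-1:ℕ):ℤ) ≤ -((N-1:ℕ):ℤ) := by nlinarith
        linarith
      · exact hk
      · have hk1 : 1 ≤ k := hk
        have : ((N-1:ℕ):ℤ) ≤ k * ((N-1:ℕ):ℤ) := by nlinarith
        linarith
    rw [hk0] at h5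
    simp at h5
    exact Fin.val_injective (by exact_mod_cast h5)
  -- eigenvalues of the two skew-circulant pieces
  set μ : Fin (N-1) → ℂ :=
    fun m => ∑ d : Fin (N-1), -((cc β (N-1) (d:ℕ) : ℝ) : ℂ) * η m ^ ((N-1) - (d:ℕ)) with hμ
  set ν : Fin (N-1) → ℂ :=
    fun m => ∑ d : Fin (N-1), ((cc β (N-1) (d:ℕ) : ℝ) : ℂ) * η m ^ ((d:ℕ)) with hν
  have hre : ∀ (c x : ℝ), (((c:ℝ):ℂ) * Complex.exp ((x:ℝ) * I)).re = c * Real.cos x := by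
    intro c x
    rw [Complex.re_ofReal_mul, Complex.exp_ofReal_mul_I_re]
  have hμre : ∀ m, (μ m).re ≤ 0 := by
    intro m
    rw [hμ]
    simp only
    rw [Complex.re_sum]
    have heq : ∀ d : Fin (N-1), (-((cc β (N-1) (d:ℕ) : ℝ) : ℂ) * η m ^ ((N-1) - (d:ℕ))).re
        = cc β (N-1) (d:ℕ) * Real.cos ((d:ℕ) * θ m) := by
      intro d
      rw [hpow]
      have hterm : (-((cc β (N-1) (d:ℕ) : ℝ) : ℂ)
            * Complex.exp (((((N-1) - (d:ℕ) : ℕ):ℝ) * θ m : ℝ) * I)).re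
          = (-(cc β (N-1) (d:ℕ))) * Real.cos ((((N-1) - (d:ℕ) : ℕ):ℝ) * θ m) := by
        rw [← Complex.ofReal_neg]
        exact hre _ _
      rw [hterm]
      have hflip := cos_flip (N-1) (m:ℕ) (d:ℕ) (by omega) (le_of_lt d.isLt)
      rw [hθ]
      simp only
      rw [hflip]
      ring
    rw [Finset.sum_congr rfl (fun d _ => heq d)]
    have hx : ∑ d : Fin (N-1), cc β (N-1) (d:ℕ) * Real.cos ((d:ℕ) * θ m)
        = ∑ d ∈ Finset.range (N-1),
            cc β (N-1) d * Real.cos ((d:ℝ) * ((2 * (m:ℕ) + 1) * Real.pi / ((N-1:ℕ):ℝ))) := by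
      rw [← Fin.sum_univ_eq_sum_range
        (fun d => cc β (N-1) d * Real.cos ((d:ℝ) * ((2 * (m:ℕ) + 1) * Real.pi / ((N-1:ℕ):ℝ))))]
    rw [hx]
    exact reSum_nonpos hβ1 hβ2 (N-1) (m:ℕ) hn2 m.isLt
  have hνre : ∀ m, (ν m).re ≤ 0 := by
    intro m
    rw [hν]
    simp only
    rw [Complex.re_sum]
    have heq : ∀ d : Fin (N-1), (((cc β (N-1) (d:ℕ) : ℝ) : ℂ) * η m ^ ((d:ℕ))).re
        = cc β (N-1) (d:ℕ) * Real.cos ((d:ℕ) * θ m) := by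
      intro d
      rw [hpow]
      exact hre _ _
    rw [Finset.sum_congr rfl (fun d _ => heq d)]
    have hx : ∑ d : Fin (N-1), cc β (N-1) (d:ℕ) * Real.cos ((d:ℕ) * θ m)
        = ∑ d ∈ Finset.range (N-1),
            cc β (N-1) d * Real.cos ((d:ℝ) * ((2 * (m:ℕ) + 1) * Real.pi / ((N-1:ℕ):ℝ))) := by
      rw [← Fin.sum_univ_eq_sum_range
        (fun d => cc β (N-1) d * Real.cos ((d:ℝ) * ((2 * (m:ℕ) + 1) * Real.pi / ((N-1:ℕ):ℝ))))]
    rw [hx]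
    exact reSum_nonpos hβ1 hβ2 (N-1) (m:ℕ) hn2 m.isLt
  -- positivity of the constant
  have hΓ : 0 < Real.Gamma (2 - α) := Real.Gamma_pos_of_pos (by linarith)
  have hCpos : 0 < h ^ β * c0 α τ := by
    have h1 : 0 < τ ^ (-α) := Real.rpow_pos_of_pos hτ _
    have h2 : (0:ℝ) < (1 - α / 2) ^ (1 - α) := Real.rpow_pos_of_pos (by linarith) _
    have h3 : 0 < h ^ β := Real.rpow_pos_of_pos hh _
    unfold c0
    positivity
  set ρ : Fin (N-1) → ℂ := fun m =>
    ((h ^ β * c0 α τ : ℝ) : ℂ)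
      - ((1 - α/2 : ℝ) : ℂ) * (((e1 : ℝ) : ℂ) * μ m + ((e2 : ℝ) : ℂ) * ν m) with hρ
  have hρre : ∀ m, 0 < (ρ m).re := by
    intro m
    rw [hρ]
    simp only [Complex.sub_re, Complex.re_ofReal_mul, Complex.add_re, Complex.ofReal_re]
    have h1 := hμre m
    have h2 := hνre m
    have hσ : (0:ℝ) < 1 - α/2 := by linarith
    have t1 : e1 * (μ m).re + e2 * (ν m).re ≤ 0 := by nlinarith
    nlinarith [mul_nonneg hσ.le (neg_nonneg.2 t1)]
  have hρne : ∀ m, ρ m ≠ 0 := by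
    intro m h0
    have := hρre m
    rw [h0] at this
    simp at this
  -- the diagonalization
  set U : Matrix (Fin (N-1)) (Fin (N-1)) ℂ := Matrix.of fun i m1 => η m1 ^ (i:ℕ) with hU
  set Pc : Matrix (Fin (N-1)) (Fin (N-1)) ℂ :=
    (Psk β α h τ e1 e2 N).map Complex.ofRealHom with hPc
  have hPU : Pc * U = U * Matrix.diagonal ρ := by
    ext i m1
    rw [Matrix.mul_apply, Matrix.mul_diagonal]
    have hexp : ∀ j, Pc i j * U j m1
        = (if i = j then ((h ^ β * c0 α τ : ℝ):ℂ) * η m1 ^ (j:ℕ) else 0)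
          - (((1-α/2)*e1 : ℝ):ℂ) * (((skG β N i j : ℝ):ℂ) * η m1 ^ (j:ℕ))
          - (((1-α/2)*e2 : ℝ):ℂ) * (((skG β N j i : ℝ):ℂ) * η m1 ^ (j:ℕ)) := by
      intro j
      rw [hPc, hU]
      simp only [Matrix.map_apply, Matrix.of_apply, Psk, skK, Matrix.sub_apply,
        Matrix.smul_apply, Matrix.add_apply, Matrix.transpose_apply, Matrix.one_apply,
        smul_eq_mul, Complex.ofRealHom_eq_coe]
      split_ifs with hij
      · push_cast; ring
      · push_cast; ring
    rw [Finset.sum_congr rfl (fun j _ => hexp j)]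
    rw [Finset.sum_sub_distrib, Finset.sum_sub_distrib, Finset.sum_ite_eq,
      ← Finset.mul_sum, ← Finset.mul_sum, sumG hN (hηpow m1), sumGT hN (hηpow m1)]
    rw [hρ, hU]
    simp only [Matrix.of_apply, Finset.mem_univ, if_true, hμ, hν]
    push_cast
    ring
  have hUdet : U.det ≠ 0 := by
    have hUv : U = (Matrix.vandermonde η)ᵀ := by
      ext i m1
      simp [hU, Matrix.vandermonde]
    rw [hUv, Matrix.det_transpose, Matrix.det_vandermonde]
    apply Finset.prod_ne_zero_iff.mpr
    intro i _
    apply Finset.prod_ne_zero_iff.mpr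
    intro j hj
    have hij : i ≠ j := by
      simp only [Finset.mem_Ioi] at hj
      exact ne_of_lt hj
    exact sub_ne_zero_of_ne fun hee => hij ((hηinj hee).symm)
  have hPcdet : Pc.det ≠ 0 := by
    have h1 : Pc.det * U.det = U.det * (Matrix.diagonal ρ).det := by
      rw [← Matrix.det_mul, ← Matrix.det_mul, hPU]
    rw [mul_comm U.det] at h1
    have h2 := mul_right_cancel₀ hUdet h1
    rw [h2, Matrix.det_diagonal]
    exact Finset.prod_ne_zero_iff.mpr fun m _ => hρne m
  have hdet : (Psk β α h τ e1 e2 N).det ≠ 0 := by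
    intro h0
    apply hPcdet
    have hmd := RingHom.map_det Complex.ofRealHom (Psk β α h τ e1 e2 N)
    rw [RingHom.mapMatrix_apply] at hmd
    rw [hPc, ← hmd, h0]
    simp
  exact (Matrix.isUnit_iff_isUnit_det _).mpr (isUnit_iff_ne_zero.mpr hdet)
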